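/- Let d ≥ 2 and f : [0,4] → [-∞,∞) be continuous on (0,4], differentiable on (0,4) with f' convex on (0,4), and lim_{t→0⁺} f(t) = f(0). Let ω* be the vertex set of a regular d-simplex inscribed in S^{d-1}. Then max_{x ∈ S^{d-1}} ∑_{v ∈ ω*} f(|x - v|²) = f(4) + d·f(2 - 2/d), attained at every point of -ω*; and if f(0) > -∞, then min_{x ∈ S^{d-1}} ∑_{v ∈ ω*} f(|x - v|²) = f(0) + d·f(2 + 2/d), attained at every point of ω*. -/

import Mathlib

open Set Finset

-- convexity sign lemmas
lemma cvx_nonneg_left {φ : ℝ → ℝ} {S : Set ℝ} (hφ : ConvexOn ℝ S φ)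
    {a b t : ℝ} (hb : b ∈ S) (ht : t ∈ S) (hab : a < b)
    (h0a : φ a = 0) (h0b : φ b = 0) (hta : t ≤ a) : 0 ≤ φ t := by
  rcases eq_or_lt_of_le hta with h | h
  · rw [← h] at h0a; linarith [h0a]
  · have hbt : (0:ℝ) < b - t := by linarith
    have key := hφ.2 ht hb (show (0:ℝ) ≤ (b-a)/(b-t) from le_of_lt (div_pos (by linarith) hbt))
      (show (0:ℝ) ≤ (a-t)/(b-t) from div_nonneg (by linarith) (by linarith))
      (by field_simp; ring)
    simp only [smul_eq_mul] at key
    have he : (b-a)/(b-t) * t + (a-t)/(b-t) * b = a := by field_simp; ring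
    rw [he, h0a, h0b] at key
    have hpos : (0:ℝ) < (b-a)/(b-t) := div_pos (by linarith) hbt
    nlinarith

lemma cvx_nonpos_mid {φ : ℝ → ℝ} {S : Set ℝ} (hφ : ConvexOn ℝ S φ)
    {a b t : ℝ} (ha : a ∈ S) (hb : b ∈ S) (hab : a < b)
    (h0a : φ a = 0) (h0b : φ b = 0) (hat : a ≤ t) (htb : t ≤ b) : φ t ≤ 0 := by
  have hba : (0:ℝ) < b - a := by linarith
  have key := hφ.2 ha hb (show (0:ℝ) ≤ (b-t)/(b-a) from div_nonneg (by linarith) (by linarith))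
    (show (0:ℝ) ≤ (t-a)/(b-a) by apply div_nonneg <;> linarith)
    (by field_simp; ring)
  simp only [smul_eq_mul] at key
  have he : (b-t)/(b-a) * a + (t-a)/(b-a) * b = t := by field_simp; ring
  rw [he, h0a, h0b] at key
  linarith

lemma cvx_nonneg_right {φ : ℝ → ℝ} {S : Set ℝ} (hφ : ConvexOn ℝ S φ)
    {a b t : ℝ} (ha : a ∈ S) (ht : t ∈ S) (hab : a < b)
    (h0a : φ a = 0) (h0b : φ b = 0) (hbt : b ≤ t) : 0 ≤ φ t := by
  rcases eq_or_lt_of_le hbt with h | h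
  · rw [h] at h0b; linarith [h0b]
  · have hta : (0:ℝ) < t - a := by linarith
    have key := hφ.2 ha ht (show (0:ℝ) ≤ (t-b)/(t-a) from div_nonneg (by linarith) (by linarith))
      (show (0:ℝ) ≤ (b-a)/(t-a) from div_nonneg (by linarith) (by linarith))
      (by field_simp; ring)
    simp only [smul_eq_mul] at key
    have he : (t-b)/(t-a) * a + (b-a)/(t-a) * t = b := by field_simp; ring
    rw [he, h0a, h0b] at key
    have hpos : (0:ℝ) < (b-a)/(t-a) := div_pos (by linarith) hta
    nlinarith

open Set

lemma quad_hasDerivAt (A B C t : ℝ) :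
    HasDerivAt (fun u => A + B*u + C*u^2) (B + 2*C*t) t := by
  have h1 : HasDerivAt (fun u : ℝ => A + B*u) (B) t := by
    simpa using ((hasDerivAt_id t).const_mul B).const_add A
  have h2 : HasDerivAt (fun u : ℝ => C*u^2) (C*(2*t)) t := by
    simpa using (((hasDerivAt_pow 2 t)).const_mul C)
  have := h1.add h2
  rw [show B + 2*C*t = B + C*(2*t) by ring]
  exact this

lemma key_upper (F f' : ℝ → ℝ) (A B C : ℝ) {a b m : ℝ}
    (ham : a < m) (hmb : m < b)
    (hcont : ContinuousOn F (Icc a b))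
    (hderiv : ∀ t ∈ Ioo a b, HasDerivAt F (f' t) t)
    (hconv : ConvexOn ℝ (Ioo a b) f')
    (hm : F m = A + B*m + C*m^2)
    (hm' : f' m = B + 2*C*m)
    (hb : F b = A + B*b + C*b^2) :
    ∀ t ∈ Icc a b, F t ≤ A + B*t + C*t^2 := by
  set q : ℝ → ℝ := fun u => A + B*u + C*u^2 with hq
  set G : ℝ → ℝ := fun u => F u - q u with hG
  have hqc : Continuous q := by fun_prop
  have hGc : ContinuousOn G (Icc a b) := hcont.sub hqc.continuousOn
  have hGd : ∀ t ∈ Ioo a b, HasDerivAt G (f' t - (B + 2*C*t)) t :=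
    fun t ht => (hderiv t ht).sub (quad_hasDerivAt A B C t)
  set φ : ℝ → ℝ := fun u => f' u - (B + 2*C*u) with hφ
  have hφconv : ConvexOn ℝ (Ioo a b) φ := by
    refine ⟨hconv.1, fun u hu v hv p r hp hr hpr => ?_⟩
    have := hconv.2 hu hv hp hr hpr
    simp only [smul_eq_mul, hφ] at this ⊢
    have e2 : B + 2*C*(p*u + r*v) = p*(B + 2*C*u) + r*(B + 2*C*v) := by
      linear_combination (-B) * hpr
    nlinarith [this, e2]
  have hGm : G m = 0 := by simp [hG, hq, hm]
  have hGb : G b = 0 := by simp [hG, hq, hb]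
  have hφm : φ m = 0 := by simp [hφ, hm']
  -- Rolle on [m, b]
  obtain ⟨ξ, hξ, hφξ⟩ : ∃ ξ ∈ Ioo m b, φ ξ = 0 := by
    refine exists_hasDerivAt_eq_zero hmb (hGc.mono ?_) (hGm.trans hGb.symm)
      (fun t ht => hGd t ⟨lt_trans ham ht.1, ht.2⟩)
    exact Icc_subset_Icc (le_of_lt ham) le_rfl
  have hξab : ξ ∈ Ioo a b := ⟨lt_trans ham hξ.1, hξ.2⟩
  have hmab : m ∈ Ioo a b := ⟨ham, hmb⟩
  -- sign of φ on Ioo a b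
  have sgn1 : ∀ t ∈ Ioo a b, t ≤ m → 0 ≤ φ t :=
    fun t ht h => cvx_nonneg_left hφconv hξab ht hξ.1 hφm hφξ h
  have sgn2 : ∀ t ∈ Ioo a b, m ≤ t → t ≤ ξ → φ t ≤ 0 :=
    fun t ht h1 h2 => cvx_nonpos_mid hφconv hmab hξab hξ.1 hφm hφξ h1 h2
  have sgn3 : ∀ t ∈ Ioo a b, ξ ≤ t → 0 ≤ φ t :=
    fun t ht h => cvx_nonneg_right hφconv hmab ht hξ.1 hφm hφξ h
  intro t ht
  have goal : G t ≤ 0 → F t ≤ A + B*t + C*t^2 := by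
    intro h; simpa [hG, hq, sub_nonpos] using h
  apply goal
  rcases le_total t m with htm | hmt
  · -- monotone on [t, m]
    have hmono : MonotoneOn G (Icc t m) := by
      refine monotoneOn_of_deriv_nonneg (convex_Icc t m) (hGc.mono ?_) ?_ ?_
      · exact Icc_subset_Icc ht.1 (le_of_lt hmb)
      · intro u hu
        rw [interior_Icc] at hu
        have hu' : u ∈ Ioo a b := ⟨lt_of_le_of_lt ht.1 hu.1, lt_trans hu.2 hmb⟩
        exact (hGd u hu').differentiableAt.differentiableWithinAt
      · intro u hu
        rw [interior_Icc] at hu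
        have hu' : u ∈ Ioo a b := ⟨lt_of_le_of_lt ht.1 hu.1, lt_trans hu.2 hmb⟩
        rw [(hGd u hu').deriv]
        exact sgn1 u hu' (le_of_lt hu.2)
    have := hmono (left_mem_Icc.2 htm) (right_mem_Icc.2 htm) htm
    rwa [hGm] at this
  · rcases le_total t ξ with htξ | hξt
    · have hanti : AntitoneOn G (Icc m ξ) := by
        refine antitoneOn_of_deriv_nonpos (convex_Icc m ξ) (hGc.mono ?_) ?_ ?_
        · exact Icc_subset_Icc (le_of_lt ham) (le_of_lt hξ.2)
        · intro u hu
          rw [interior_Icc] at hu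
          have hu' : u ∈ Ioo a b := ⟨lt_trans ham hu.1, lt_trans hu.2 hξab.2⟩
          exact (hGd u hu').differentiableAt.differentiableWithinAt
        · intro u hu
          rw [interior_Icc] at hu
          have hu' : u ∈ Ioo a b := ⟨lt_trans ham hu.1, lt_trans hu.2 hξab.2⟩
          rw [(hGd u hu').deriv]
          exact sgn2 u hu' (le_of_lt hu.1) (le_of_lt hu.2)
      have := hanti (left_mem_Icc.2 (hmt.trans htξ)) ⟨hmt, htξ⟩ hmt
      rwa [hGm] at this
    · have hmono : MonotoneOn G (Icc ξ b) := by
        refine monotoneOn_of_deriv_nonneg (convex_Icc ξ b) (hGc.mono ?_) ?_ ?_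
        · exact Icc_subset_Icc (le_of_lt hξab.1) le_rfl
        · intro u hu
          rw [interior_Icc] at hu
          have hu' : u ∈ Ioo a b := ⟨lt_trans hξab.1 hu.1, hu.2⟩
          exact (hGd u hu').differentiableAt.differentiableWithinAt
        · intro u hu
          rw [interior_Icc] at hu
          have hu' : u ∈ Ioo a b := ⟨lt_trans hξab.1 hu.1, hu.2⟩
          rw [(hGd u hu').deriv]
          exact sgn3 u hu' (le_of_lt hu.1)
      have := hmono ⟨hξt, ht.2⟩ (right_mem_Icc.2 hξab.2.le) ht.2
      rwa [hGb] at this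
lemma key_lower (F f' : ℝ → ℝ) (A B C : ℝ) {a b m : ℝ}
    (ham : a < m) (hmb : m < b)
    (hcont : ContinuousOn F (Icc a b))
    (hderiv : ∀ t ∈ Ioo a b, HasDerivAt F (f' t) t)
    (hconv : ConvexOn ℝ (Ioo a b) f')
    (hm : F m = A + B*m + C*m^2)
    (hm' : f' m = B + 2*C*m)
    (ha : F a = A + B*a + C*a^2) :
    ∀ t ∈ Icc a b, A + B*t + C*t^2 ≤ F t := by
  set q : ℝ → ℝ := fun u => A + B*u + C*u^2 with hq
  set G : ℝ → ℝ := fun u => F u - q u with hG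
  have hqc : Continuous q := by fun_prop
  have hGc : ContinuousOn G (Icc a b) := hcont.sub hqc.continuousOn
  have hGd : ∀ t ∈ Ioo a b, HasDerivAt G (f' t - (B + 2*C*t)) t :=
    fun t ht => (hderiv t ht).sub (quad_hasDerivAt A B C t)
  set φ : ℝ → ℝ := fun u => f' u - (B + 2*C*u) with hφ
  have hφconv : ConvexOn ℝ (Ioo a b) φ := by
    refine ⟨hconv.1, fun u hu v hv p r hp hr hpr => ?_⟩
    have := hconv.2 hu hv hp hr hpr
    simp only [smul_eq_mul, hφ] at this ⊢
    have e2 : B + 2*C*(p*u + r*v) = p*(B + 2*C*u) + r*(B + 2*C*v) := by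
      linear_combination (-B) * hpr
    nlinarith [this, e2]
  have hGm : G m = 0 := by simp [hG, hq, hm]
  have hGa : G a = 0 := by simp [hG, hq, ha]
  have hφm : φ m = 0 := by simp [hφ, hm']
  -- Rolle on [a, m]
  obtain ⟨ξ, hξ, hφξ⟩ : ∃ ξ ∈ Ioo a m, φ ξ = 0 := by
    refine exists_hasDerivAt_eq_zero ham (hGc.mono ?_) (hGa.trans hGm.symm)
      (fun t ht => hGd t ⟨ht.1, lt_trans ht.2 hmb⟩)
    exact Icc_subset_Icc le_rfl (le_of_lt hmb)
  have hξab : ξ ∈ Ioo a b := ⟨hξ.1, lt_trans hξ.2 hmb⟩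
  have hmab : m ∈ Ioo a b := ⟨ham, hmb⟩
  have sgn1 : ∀ t ∈ Ioo a b, t ≤ ξ → 0 ≤ φ t :=
    fun t ht h => cvx_nonneg_left hφconv hmab ht hξ.2 hφξ hφm h
  have sgn2 : ∀ t ∈ Ioo a b, ξ ≤ t → t ≤ m → φ t ≤ 0 :=
    fun t ht h1 h2 => cvx_nonpos_mid hφconv hξab hmab hξ.2 hφξ hφm h1 h2
  have sgn3 : ∀ t ∈ Ioo a b, m ≤ t → 0 ≤ φ t :=
    fun t ht h => cvx_nonneg_right hφconv hξab ht hξ.2 hφξ hφm h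
  intro t ht
  have goal : 0 ≤ G t → A + B*t + C*t^2 ≤ F t := by
    intro h; simpa [hG, hq, sub_nonneg] using h
  apply goal
  rcases le_total t ξ with htξ | hξt
  · have hmono : MonotoneOn G (Icc a ξ) := by
      refine monotoneOn_of_deriv_nonneg (convex_Icc a ξ) (hGc.mono ?_) ?_ ?_
      · exact Icc_subset_Icc le_rfl (le_of_lt hξab.2)
      · intro u hu
        rw [interior_Icc] at hu
        have hu' : u ∈ Ioo a b := ⟨hu.1, lt_trans hu.2 hξab.2⟩
        exact (hGd u hu').differentiableAt.differentiableWithinAt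
      · intro u hu
        rw [interior_Icc] at hu
        have hu' : u ∈ Ioo a b := ⟨hu.1, lt_trans hu.2 hξab.2⟩
        rw [(hGd u hu').deriv]
        exact sgn1 u hu' (le_of_lt hu.2)
    have := hmono (left_mem_Icc.2 (ht.1.trans htξ)) ⟨ht.1, htξ⟩ ht.1
    rwa [hGa] at this
  · rcases le_total t m with htm | hmt
    · have hanti : AntitoneOn G (Icc ξ m) := by
        refine antitoneOn_of_deriv_nonpos (convex_Icc ξ m) (hGc.mono ?_) ?_ ?_
        · exact Icc_subset_Icc (le_of_lt hξab.1) (le_of_lt hmb)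
        · intro u hu
          rw [interior_Icc] at hu
          have hu' : u ∈ Ioo a b := ⟨lt_trans hξab.1 hu.1, lt_trans hu.2 hmb⟩
          exact (hGd u hu').differentiableAt.differentiableWithinAt
        · intro u hu
          rw [interior_Icc] at hu
          have hu' : u ∈ Ioo a b := ⟨lt_trans hξab.1 hu.1, lt_trans hu.2 hmb⟩
          rw [(hGd u hu').deriv]
          exact sgn2 u hu' (le_of_lt hu.1) (le_of_lt hu.2)
      have := hanti ⟨hξt, htm⟩ (right_mem_Icc.2 (hξt.trans htm)) htm
      rwa [hGm] at this
    · have hmono : MonotoneOn G (Icc m b) := by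
        refine monotoneOn_of_deriv_nonneg (convex_Icc m b) (hGc.mono ?_) ?_ ?_
        · exact Icc_subset_Icc (le_of_lt ham) le_rfl
        · intro u hu
          rw [interior_Icc] at hu
          have hu' : u ∈ Ioo a b := ⟨lt_trans ham hu.1, hu.2⟩
          exact (hGd u hu').differentiableAt.differentiableWithinAt
        · intro u hu
          rw [interior_Icc] at hu
          have hu' : u ∈ Ioo a b := ⟨lt_trans ham hu.1, hu.2⟩
          rw [(hGd u hu').deriv]
          exact sgn3 u hu' (le_of_lt hu.1)
      have := hmono (left_mem_Icc.2 (le_of_lt hmb)) ⟨hmt, ht.2⟩ hmt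
      rwa [hGm] at this
open RealInnerProductSpace in
lemma simplex_facts (d : ℕ) (hd : 2 ≤ d)
    (x : Fin (d+1) → EuclideanSpace ℝ (Fin d))
    (hnorm : ∀ i, ‖x i‖ = 1)
    (hinner : ∀ i j, i ≠ j → (inner ℝ (x i) (x j) : ℝ) = -1/(d:ℝ)) :
    (∑ i, x i = 0) ∧
    (∀ y : EuclideanSpace ℝ (Fin d), ‖y‖ = 1 →
      (∑ i, ⟪y, x i⟫ = 0) ∧ (∑ i, ⟪y, x i⟫^2 = ((d:ℝ)+1)/d) ∧
      (∀ i, -1 ≤ ⟪y, x i⟫ ∧ ⟪y, x i⟫ ≤ 1)) := by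
  have hd0 : (d:ℝ) ≠ 0 := by positivity
  have hself : ∀ i, ⟪x i, x i⟫ = 1 := by
    intro i; rw [real_inner_self_eq_norm_sq, hnorm]; norm_num
  have hrow : ∀ i, ∑ j, ⟪x i, x j⟫ = 0 := by
    intro i
    rw [← Finset.add_sum_erase _ _ (Finset.mem_univ i), hself]
    have : ∑ j ∈ Finset.univ.erase i, ⟪x i, x j⟫
        = ∑ j ∈ Finset.univ.erase i, (-1/(d:ℝ)) := by
      refine Finset.sum_congr rfl fun j hj => ?_
      exact hinner i j (Ne.symm (Finset.ne_of_mem_erase hj))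
    rw [this, Finset.sum_const, Finset.card_erase_of_mem (Finset.mem_univ i),
      Finset.card_univ, Fintype.card_fin]
    simp only [Nat.add_sub_cancel, nsmul_eq_mul]
    field_simp
    norm_num
  have hsum0 : ∑ i, x i = 0 := by
    rw [← inner_self_eq_zero (𝕜 := ℝ)]
    rw [sum_inner]
    rw [Finset.sum_eq_zero]
    intro i _
    rw [inner_sum]
    exact hrow i
  refine ⟨hsum0, fun y hy => ?_⟩
  have hS : ∑ i, ⟪y, x i⟫ = 0 := by
    rw [← inner_sum, hsum0, inner_zero_right]
  -- the row sums against coefficients u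
  have hrowu : ∀ j, ∑ i, ⟪y, x i⟫ * ⟪x i, x j⟫ = ((d:ℝ)+1)/d * ⟪y, x j⟫ := by
    intro j
    rw [← Finset.add_sum_erase _ _ (Finset.mem_univ j), hself]
    have : ∑ i ∈ Finset.univ.erase j, ⟪y, x i⟫ * ⟪x i, x j⟫
        = ∑ i ∈ Finset.univ.erase j, ⟪y, x i⟫ * (-1/(d:ℝ)) := by
      refine Finset.sum_congr rfl fun i hi => ?_
      rw [hinner i j (Finset.ne_of_mem_erase hi)]
    rw [this, ← Finset.sum_mul]
    have he : ∑ i ∈ Finset.univ.erase j, ⟪y, x i⟫ = -⟪y, x j⟫ := by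
      have := Finset.add_sum_erase _ (fun i => ⟪y, x i⟫) (Finset.mem_univ j)
      rw [hS] at this
      linarith
    rw [he]
    field_simp
  -- linear independence of x ∘ succ
  have hli : LinearIndependent ℝ (fun i : Fin d => x i.succ) := by
    rw [Fintype.linearIndependent_iff]
    intro g hg j
    have hC : ∀ j : Fin d, (1 + 1/(d:ℝ)) * g j = (∑ i, g i)/d := by
      intro j
      have h0 : ⟪∑ i, g i • x i.succ, x j.succ⟫ = 0 := by rw [hg, inner_zero_left]
      rw [sum_inner] at h0
      simp only [real_inner_smul_left] at h0
      have : ∑ i, g i * ⟪x i.succ, x j.succ⟫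
          = g j * 1 + ∑ i ∈ Finset.univ.erase j, g i * (-1/(d:ℝ)) := by
        rw [← Finset.add_sum_erase _ _ (Finset.mem_univ j), hself]
        refine congrArg _ (Finset.sum_congr rfl fun i hi => ?_)
        rw [hinner _ _ (fun h => (Finset.ne_of_mem_erase hi) (Fin.succ_injective d h))]
      rw [this, ← Finset.sum_mul] at h0
      have he : ∑ i ∈ Finset.univ.erase j, g i = (∑ i, g i) - g j := by
        have := Finset.add_sum_erase _ g (Finset.mem_univ j)
        linarith
      rw [he] at h0
      field_simp at h0 ⊢
      linarith
    have hCsum : (∑ i, g i) = 0 := by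
      have h2 : ∑ j : Fin d, ((1 + 1/(d:ℝ)) * g j) = ∑ j : Fin d, (∑ i, g i)/d := by
        exact Finset.sum_congr rfl fun j _ => hC j
      rw [← Finset.mul_sum, Finset.sum_const, Finset.card_univ, Fintype.card_fin,
        nsmul_eq_mul] at h2
      have : (1/(d:ℝ)) * (∑ i, g i) = 0 := by field_simp at h2 ⊢; linarith
      have h1d : (1/(d:ℝ)) ≠ 0 := by positivity
      exact (mul_eq_zero.mp this).resolve_left h1d
    have := hC j
    rw [hCsum] at this
    have h1d : (0:ℝ) < 1 + 1/(d:ℝ) := by positivity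
    simp only [zero_div] at this
    exact (mul_eq_zero.mp this).resolve_left (ne_of_gt h1d)
  have hspan : Submodule.span ℝ (Set.range (fun i : Fin d => x i.succ)) = ⊤ := by
    refine hli.span_eq_top_of_card_eq_finrank' ?_
    simp [finrank_euclideanSpace_fin]
  -- z = 0
  set z : EuclideanSpace ℝ (Fin d) :=
    (((d:ℝ)+1)/d) • y - ∑ i, ⟪y, x i⟫ • x i with hzdef
  have hz_inner : ∀ j, ⟪z, x j⟫ = 0 := by
    intro j
    rw [hzdef, inner_sub_left, real_inner_smul_left, sum_inner]
    simp only [real_inner_smul_left]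
    rw [hrowu j]
    ring
  have hz0 : z = 0 := by
    have hzmem : z ∈ Submodule.span ℝ (Set.range (fun i : Fin d => x i.succ)) := by
      rw [hspan]; trivial
    rw [Submodule.mem_span_range_iff_exists_fun ℝ] at hzmem
    obtain ⟨c, hc⟩ := hzmem
    rw [← inner_self_eq_zero (𝕜 := ℝ)]
    nth_rewrite 1 [← hc]
    rw [sum_inner]
    refine Finset.sum_eq_zero fun i _ => ?_
    rw [real_inner_smul_left, real_inner_comm, hz_inner]
    ring
  have hyy : ⟪y, y⟫ = 1 := by
    rw [real_inner_self_eq_norm_sq, hy]; norm_num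
  have hframe : ∑ i, ⟪y, x i⟫^2 = ((d:ℝ)+1)/d := by
    have h0 : ⟪y, z⟫ = 0 := by rw [hz0, inner_zero_right]
    rw [hzdef, inner_sub_right, real_inner_smul_right, hyy, inner_sum] at h0
    simp only [real_inner_smul_right] at h0
    have : ∑ i, ⟪y, x i⟫ * ⟪y, x i⟫ = ∑ i, ⟪y, x i⟫^2 := by
      refine Finset.sum_congr rfl fun i _ => ?_; ring
    rw [this] at h0
    linarith
  refine ⟨hS, hframe, fun i => ?_⟩
  have := abs_real_inner_le_norm y (x i)
  rw [hy, hnorm i] at this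
  simp only [one_mul] at this
  constructor <;> [linarith [neg_abs_le ⟪y, x i⟫]; linarith [le_abs_self ⟪y, x i⟫]]
open RealInnerProductSpace Filter in
theorem stmt_13 (d : ℕ) (hd : 2 ≤ d) (f : ℝ → EReal) (f' : ℝ → ℝ)
    (hne_top : ∀ t ∈ Set.Icc (0:ℝ) 4, f t ≠ ⊤)
    (hfin : ∀ t ∈ Set.Ioc (0:ℝ) 4, f t ≠ ⊥)
    (hcont : ContinuousOn f (Set.Ioc (0:ℝ) 4))
    (hderiv : ∀ t ∈ Set.Ioo (0:ℝ) 4, HasDerivAt (fun s => (f s).toReal) (f' t) t)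
    (hconv : ConvexOn ℝ (Set.Ioo (0:ℝ) 4) f')
    (hlim : Filter.Tendsto f (nhdsWithin 0 (Set.Ioi 0)) (nhds (f 0)))
    (x : Fin (d+1) → EuclideanSpace ℝ (Fin d))
    (hnorm : ∀ i, ‖x i‖ = 1)
    (hinner : ∀ i j, i ≠ j → (inner ℝ (x i) (x j) : ℝ) = -1/(d:ℝ)) :
    ((∀ y : EuclideanSpace ℝ (Fin d), ‖y‖ = 1 →
        ∑ i, f (‖y - x i‖^2) ≤ f 4 + ((d:ℝ) : EReal) * f (2 - 2/(d:ℝ))) ∧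
      (∀ k, ∑ i, f (‖(-(x k)) - x i‖^2) = f 4 + ((d:ℝ) : EReal) * f (2 - 2/(d:ℝ)))) ∧
    (f 0 ≠ ⊥ →
      (∀ y : EuclideanSpace ℝ (Fin d), ‖y‖ = 1 →
        f 0 + ((d:ℝ) : EReal) * f (2 + 2/(d:ℝ)) ≤ ∑ i, f (‖y - x i‖^2)) ∧
      (∀ k, ∑ i, f (‖x k - x i‖^2) = f 0 + ((d:ℝ) : EReal) * f (2 + 2/(d:ℝ)))) := by
  have hd2 : (2:ℝ) ≤ (d:ℝ) := by exact_mod_cast hd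
  have hdpos : (0:ℝ) < (d:ℝ) := by linarith
  have hdiv : 2/(d:ℝ) ≤ 1 := by rw [div_le_one hdpos]; linarith
  have hdivpos : 0 < 2/(d:ℝ) := by positivity
  obtain ⟨hsum0, hyfacts⟩ := simplex_facts d hd x hnorm hinner
  set F : ℝ → ℝ := fun t => (f t).toReal with hF
  have hcoe : ∀ t ∈ Set.Ioc (0:ℝ) 4, f t = ((F t : ℝ) : EReal) := by
    intro t ht
    exact (EReal.coe_toReal (hne_top t ⟨le_of_lt ht.1, ht.2⟩) (hfin t ht)).symm
  have hFcont : ContinuousOn F (Set.Ioc (0:ℝ) 4) := by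
    intro t ht
    exact (EReal.tendsto_toReal (hne_top t ⟨le_of_lt ht.1, ht.2⟩)
      (hfin t ht)).comp (hcont t ht)
  have coe_sum : ∀ (g : Fin (d+1) → ℝ),
      ((∑ i, g i : ℝ) : EReal) = ∑ i, ((g i : ℝ) : EReal) := fun g =>
    map_sum (⟨⟨Real.toEReal, EReal.coe_zero⟩, EReal.coe_add⟩ : ℝ →+ EReal) g Finset.univ
  set s : ℝ := 2 - 2/(d:ℝ) with hs
  set s' : ℝ := 2 + 2/(d:ℝ) with hs'
  have hs1 : 1 ≤ s := by rw [hs]; linarith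
  have hsIoo : s ∈ Set.Ioo (0:ℝ) 4 := ⟨by linarith, by rw [hs]; linarith⟩
  have hsIoc : s ∈ Set.Ioc (0:ℝ) 4 := ⟨hsIoo.1, le_of_lt hsIoo.2⟩
  have hs'Ioo : s' ∈ Set.Ioo (0:ℝ) 4 := ⟨by rw [hs']; linarith, by rw [hs']; linarith⟩
  have h4Ioc : (4:ℝ) ∈ Set.Ioc (0:ℝ) 4 := ⟨by norm_num, le_rfl⟩
  -- norm formula
  have ht_eq : ∀ (y : EuclideanSpace ℝ (Fin d)), ‖y‖ = 1 → ∀ i,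
      ‖y - x i‖^2 = 2 - 2*⟪y, x i⟫ := by
    intro y hy i
    rw [norm_sub_sq_real, hy, hnorm]
    ring
  -- quadratic sums
  have hqsum : ∀ (y : EuclideanSpace ℝ (Fin d)), ‖y‖ = 1 → ∀ (A B C : ℝ),
      ∑ i, (A + B*(2-2*⟪y, x i⟫) + C*(2-2*⟪y, x i⟫)^2)
        = ((d:ℝ)+1)*A + B*(2*(d:ℝ)+2) + C*(4*(d:ℝ)+8+4/(d:ℝ)) := by
    intro y hy A B C
    obtain ⟨hS, hF2, _⟩ := hyfacts y hy
    have e : ∀ i : Fin (d+1), A + B*(2-2*⟪y, x i⟫) + C*(2-2*⟪y, x i⟫)^2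
        = (A + 2*B + 4*C) + (-(2*B) - 8*C)*⟪y, x i⟫ + (4*C)*⟪y, x i⟫^2 :=
      fun i => by ring
    rw [Finset.sum_congr rfl (fun i _ => e i), Finset.sum_add_distrib,
      Finset.sum_add_distrib, Finset.sum_const, ← Finset.mul_sum, ← Finset.mul_sum,
      hS, hF2, Finset.card_univ, Fintype.card_fin, nsmul_eq_mul]
    push_cast
    field_simp
    ring
  constructor
  · -- MAX part
    set c : ℝ := (F 4 - F s - f' s * (4 - s)) / (4 - s)^2 with hc
    set A : ℝ := F s - f' s * s + c * s^2 with hA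
    set B : ℝ := f' s - 2*c*s with hB
    have hm : F s = A + B*s + c*s^2 := by rw [hA, hB]; ring
    have hm' : f' s = B + 2*c*s := by rw [hB]; ring
    have hs4 : (4:ℝ) - s ≠ 0 := by have := hsIoo.2; intro h; linarith
    have hb : F 4 = A + B*4 + c*4^2 := by
      rw [hA, hB, hc]
      field_simp
      ring
    -- pointwise bound on (0,4]
    have hFq : ∀ t ∈ Set.Ioc (0:ℝ) 4, F t ≤ A + B*t + c*t^2 := by
      intro t ht
      have ha0 : 0 < min t s / 2 := by
        have := lt_min ht.1 hsIoo.1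
        positivity
      have hat : min t s / 2 < t := by
        exact lt_of_lt_of_le (half_lt_self (lt_min ht.1 hsIoo.1)) (min_le_left t s)
      have has : min t s / 2 < s := by
        exact lt_of_lt_of_le (half_lt_self (lt_min ht.1 hsIoo.1)) (min_le_right t s)
      refine key_upper F f' A B c has hsIoo.2 (hFcont.mono ?_)
        (fun u hu => hderiv u ⟨lt_trans ha0 hu.1, hu.2⟩)
        (hconv.subset (Set.Ioo_subset_Ioo (le_of_lt ha0) le_rfl) (convex_Ioo _ _))
        hm hm' hb t ⟨le_of_lt hat, ht.2⟩
      intro u hu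
      exact ⟨lt_of_lt_of_le ha0 hu.1, hu.2⟩
    -- EReal pointwise bound on [0,4]
    have hEq : ∀ t ∈ Set.Icc (0:ℝ) 4, f t ≤ ((A + B*t + c*t^2 : ℝ) : EReal) := by
      intro t ht
      rcases eq_or_lt_of_le ht.1 with h0 | h0
      · -- t = 0 : limit argument
        rw [← h0]
        have htend2 : Tendsto (fun u => ((A + B*u + c*u^2 : ℝ) : EReal))
            (nhdsWithin 0 (Set.Ioi 0)) (nhds ((A + B*0 + c*0^2 : ℝ) : EReal)) := by
          apply Filter.Tendsto.mono_left
          · exact (continuous_coe_real_ereal.comp (by fun_prop)).tendsto 0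
          · exact nhdsWithin_le_nhds
        refine le_of_tendsto_of_tendsto hlim htend2 ?_
        filter_upwards [Ioo_mem_nhdsGT_of_mem
          (Set.mem_Ico.2 ⟨le_rfl, (by norm_num : (0:ℝ) < 4)⟩)] with u hu
        rw [hcoe u ⟨hu.1, le_of_lt hu.2⟩]
        exact_mod_cast hFq u ⟨hu.1, le_of_lt hu.2⟩
      · rw [hcoe t ⟨h0, ht.2⟩]
        exact_mod_cast hFq t ⟨h0, ht.2⟩
    constructor
    · -- upper bound
      intro y hy
      calc ∑ i, f (‖y - x i‖^2)
          ≤ ∑ i, ((A + B*(2-2*⟪y, x i⟫) + c*(2-2*⟪y, x i⟫)^2 : ℝ) : EReal) := by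
            refine Finset.sum_le_sum fun i _ => ?_
            rw [ht_eq y hy i]
            refine hEq _ ⟨?_, ?_⟩
            · have := (hyfacts y hy).2.2 i; linarith [this.2]
            · have := (hyfacts y hy).2.2 i; linarith [this.1]
        _ = ((∑ i, (A + B*(2-2*⟪y, x i⟫) + c*(2-2*⟪y, x i⟫)^2) : ℝ) : EReal) :=
            (coe_sum _).symm
        _ = ((F 4 + (d:ℝ) * F s : ℝ) : EReal) := by
            rw [hqsum y hy A B c]
            congr 1
            rw [hb, hm, hs]
            field_simp
            ring
        _ = f 4 + ((d:ℝ) : EReal) * f s := by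
            rw [hcoe 4 h4Ioc, hcoe s hsIoc, EReal.coe_add, EReal.coe_mul]
    · -- equality at -x k
      intro k
      have hky : ‖(-(x k) : EuclideanSpace ℝ (Fin d))‖ = 1 := by
        rw [norm_neg]; exact hnorm k
      have hterm : ∀ i, ‖(-(x k)) - x i‖^2 = 2 + 2*⟪x k, x i⟫ := by
        intro i
        rw [ht_eq _ hky i, inner_neg_left]
        ring
      have hkk : ‖(-(x k)) - x k‖^2 = 4 := by
        rw [hterm k, real_inner_self_eq_norm_sq, hnorm]
        norm_num
      have hki : ∀ i, i ≠ k → ‖(-(x k)) - x i‖^2 = s := by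
        intro i hik
        rw [hterm i, hinner k i (Ne.symm hik), hs]
        ring
      rw [← Finset.add_sum_erase _ _ (Finset.mem_univ k), hkk]
      congr 1
      have : ∀ i ∈ Finset.univ.erase k, f (‖(-(x k)) - x i‖^2) = ((F s : ℝ) : EReal) := by
        intro i hi
        rw [hki i (Finset.ne_of_mem_erase hi), hcoe s hsIoc]
      rw [Finset.sum_congr rfl this, Finset.sum_const,
        Finset.card_erase_of_mem (Finset.mem_univ k), Finset.card_univ, Fintype.card_fin,
        Nat.add_sub_cancel, ← EReal.coe_nsmul, nsmul_eq_mul, EReal.coe_mul,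
        hcoe s hsIoc]
  · -- MIN part
    intro hbot
    have hcoe0 : ∀ t ∈ Set.Icc (0:ℝ) 4, f t = ((F t : ℝ) : EReal) := by
      intro t ht
      rcases eq_or_lt_of_le ht.1 with h0 | h0
      · rw [← h0]
        exact (EReal.coe_toReal (hne_top 0 ⟨le_rfl, by norm_num⟩) hbot).symm
      · exact hcoe t ⟨h0, ht.2⟩
    have hFcont0 : ContinuousOn F (Set.Icc (0:ℝ) 4) := by
      intro t ht
      rcases eq_or_lt_of_le ht.1 with h0 | h0
      · rw [← h0]
        rw [← continuousWithinAt_diff_self]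
        have hsub : Set.Icc (0:ℝ) 4 \ {0} ⊆ Set.Ioi 0 := by
          intro u hu
          rcases eq_or_lt_of_le hu.1.1 with h | h
          · exact absurd h.symm hu.2
          · exact h
        refine ContinuousWithinAt.mono ?_ hsub
        have := (EReal.tendsto_toReal (hne_top 0 ⟨le_rfl, by norm_num⟩) hbot).comp hlim
        exact this
      · refine (hFcont t ⟨h0, ht.2⟩).mono_of_mem_nhdsWithin ?_
        have : Set.Ioc (0:ℝ) 4 = Set.Icc (0:ℝ) 4 ∩ Set.Ioi 0 := by
          ext u; simp [Set.mem_Ioc, Set.mem_Icc, Set.mem_Ioi]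
          constructor
          · intro h; exact ⟨⟨le_of_lt h.1, h.2⟩, h.1⟩
          · intro h; exact ⟨h.2, h.1.2⟩
        rw [this]
        exact Filter.inter_mem self_mem_nhdsWithin
          (mem_nhdsWithin_of_mem_nhds (Ioi_mem_nhds h0))
    set c' : ℝ := (F 0 - F s' + f' s' * s') / s'^2 with hc'
    set A' : ℝ := F s' - f' s' * s' + c' * s'^2 with hA'
    set B' : ℝ := f' s' - 2*c'*s' with hB'
    have hm2 : F s' = A' + B'*s' + c'*s'^2 := by rw [hA', hB']; ring
    have hm2' : f' s' = B' + 2*c'*s' := by rw [hB']; ring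
    have hs'ne : s' ≠ 0 := ne_of_gt hs'Ioo.1
    have ha2 : F 0 = A' + B'*0 + c'*0^2 := by
      rw [hA', hB', hc']
      field_simp
      ring
    have hlow := key_lower F f' A' B' c' hs'Ioo.1 hs'Ioo.2 hFcont0 hderiv hconv hm2 hm2' ha2
    have hEq' : ∀ t ∈ Set.Icc (0:ℝ) 4, ((A' + B'*t + c'*t^2 : ℝ) : EReal) ≤ f t := by
      intro t ht
      rw [hcoe0 t ht]
      exact_mod_cast hlow t ht
    constructor
    · intro y hy
      calc f 0 + ((d:ℝ) : EReal) * f s'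
          = ((F 0 + (d:ℝ) * F s' : ℝ) : EReal) := by
            rw [hcoe0 0 ⟨le_rfl, by norm_num⟩,
              hcoe0 s' ⟨le_of_lt hs'Ioo.1, le_of_lt hs'Ioo.2⟩, EReal.coe_add, EReal.coe_mul]
        _ = ((∑ i, (A' + B'*(2-2*⟪y, x i⟫) + c'*(2-2*⟪y, x i⟫)^2) : ℝ) : EReal) := by
            rw [hqsum y hy A' B' c']
            congr 1
            rw [ha2, hm2, hs']
            field_simp
            ring
        _ = ∑ i, ((A' + B'*(2-2*⟪y, x i⟫) + c'*(2-2*⟪y, x i⟫)^2 : ℝ) : EReal) :=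
            coe_sum _
        _ ≤ ∑ i, f (‖y - x i‖^2) := by
            refine Finset.sum_le_sum fun i _ => ?_
            rw [ht_eq y hy i]
            refine hEq' _ ⟨?_, ?_⟩
            · have := (hyfacts y hy).2.2 i; linarith [this.2]
            · have := (hyfacts y hy).2.2 i; linarith [this.1]
    · intro k
      have hkk : ‖x k - x k‖^2 = 0 := by
        rw [sub_self, norm_zero]
        norm_num
      have hki : ∀ i, i ≠ k → ‖x k - x i‖^2 = s' := by
        intro i hik
        rw [ht_eq _ (hnorm k) i, hinner k i (Ne.symm hik), hs']
        ring
      rw [← Finset.add_sum_erase _ _ (Finset.mem_univ k), hkk]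
      congr 1
      have : ∀ i ∈ Finset.univ.erase k, f (‖x k - x i‖^2) = ((F s' : ℝ) : EReal) := by
        intro i hi
        rw [hki i (Finset.ne_of_mem_erase hi),
          hcoe s' ⟨hs'Ioo.1, le_of_lt hs'Ioo.2⟩]
      rw [Finset.sum_congr rfl this, Finset.sum_const,
        Finset.card_erase_of_mem (Finset.mem_univ k), Finset.card_univ, Fintype.card_fin,
        Nat.add_sub_cancel, ← EReal.coe_nsmul, nsmul_eq_mul, EReal.coe_mul,
        hcoe s' ⟨hs'Ioo.1, le_of_lt hs'Ioo.2⟩]
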